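/- arXiv:0801.0532 — 2 statements merged into one kernel-verified Lean document; each statement's English description precedes it below -/
import Mathlib

section
/- Define the complexity of a surjection f: {1, …, m} → {1, …, n} as the maximum over pairs 1 ≤ i < j ≤ n of (the number of alternations between i and j in the subsequence of f consisting of values in {i,j}) minus 1. Then complexity is subadditive under operadic composition of surjections: the complexity of a composite Γ(f; g_1, …, g_n) is at most the value predicted by the complete graph operad composition, i.e., for indices in the same block r it is governed by the complexity of g_r, and for indices in distinct blocks r, s by the (r,s)-alternation number of f. -/
/-!
STATEMENT 11: Complexity of surjections (McClure–Smith) is governed by the complete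
graph operad composition.  The alternation number `alt_{ij}(f)` of a sequence `f` is
the number of switches in the subsequence of `f` with values in `{i,j}`; complexity
is `max alt − 1`.  For a composite sequence `h = Γ(f; g_1,…,g_n)` — i.e. `h` maps
block-wise onto a repetition-blowup of `f` and, within each block `r`, onto a
repetition-blowup of `g_r` — the alternation of `h` on a pair of indices in the same
block `r` is at most the corresponding alternation of `g_r`, and on a pair of
indices in distinct blocks `r, s` it is at most `alt_{rs}(f)`.
-/

/-- The number of switches (alternations) in a list: the number of adjacent pairs of
distinct entries. -/
def switches {α : Type*} [DecidableEq α] : List α → ℕ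
  | [] => 0
  | [_] => 0
  | a :: b :: t => (if a = b then 0 else 1) + switches (b :: t)

/-- `altOn l i j` : the alternation number of `l` for the pair `{i, j}`: the number
of switches of the subsequence of `l` consisting of the values `i` and `j`. -/
def altOn {α : Type*} [DecidableEq α] (l : List α) (i j : α) : ℕ :=
  switches (l.filter (fun x => x == i || x == j))

/-- `Blowup l l'` : `l'` is obtained from `l` by replacing each entry by one or more
adjacent copies of itself (order preserved). -/
inductive Blowup {α : Type*} : List α → List α → Prop
  | nil : Blowup [] []
  | cons (a : α) (m : ℕ) {l l' : List α} :
      Blowup l l' → Blowup (a :: l) (List.replicate (m + 1) a ++ l')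


private lemma switches_cons_le {α : Type*} [DecidableEq α] (a b : α) (l : List α) :
    switches (a :: l) ≤ (if a = b then 0 else 1) + switches (b :: l) := by
  cases l with
  | nil => simp [switches]
  | cons x t =>
    simp only [switches]
    by_cases h1 : a = b <;> by_cases h2 : b = x <;> by_cases h3 : a = x <;>
      simp_all <;> omega

private lemma le_switches_cons {α : Type*} [DecidableEq α] (a : α) (l : List α) :
    switches l ≤ switches (a :: l) := by
  cases l with
  | nil => simp [switches]
  | cons x t => simp only [switches]; omega

private lemma switches_sublist {α : Type*} [DecidableEq α] {l₁ l₂ : List α}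
    (h : l₁.Sublist l₂) :
    switches l₁ ≤ switches l₂ ∧ ∀ a, switches (a :: l₁) ≤ switches (a :: l₂) := by
  induction h with
  | slnil => exact ⟨le_rfl, fun _ => le_rfl⟩
  | @cons l₁ l₂ b h ih =>
    refine ⟨ih.1.trans (le_switches_cons b l₂), fun a => ?_⟩
    calc switches (a :: l₁) ≤ (if a = b then 0 else 1) + switches (b :: l₁) :=
          switches_cons_le a b l₁
      _ ≤ (if a = b then 0 else 1) + switches (b :: l₂) := by
          have := ih.2 b; omega
      _ = switches (a :: b :: l₂) := by simp [switches]
  | @cons_cons l₁ l₂ b h ih =>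
    refine ⟨ih.2 b, fun a => ?_⟩
    simp only [switches]
    have := ih.2 b; omega

private lemma switches_replicate_append {α : Type*} [DecidableEq α] (a : α) (m : ℕ)
    (l : List α) : switches (List.replicate (m + 1) a ++ l) = switches (a :: l) := by
  induction m with
  | zero => rfl
  | succ k ih =>
    have e2 : List.replicate (k + 1) a ++ l = a :: (List.replicate k a ++ l) := by
      rw [List.replicate_succ, List.cons_append]
    have e : List.replicate (k + 1 + 1) a ++ l = a :: (List.replicate (k + 1) a ++ l) := by
      rw [List.replicate_succ, List.cons_append]
    rw [e, e2, switches, ← e2, ih]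
    simp

private lemma blowup_switches_cons {α : Type*} [DecidableEq α] {l l' : List α}
    (hb : Blowup l l') : ∀ a, switches (a :: l') = switches (a :: l) := by
  induction hb with
  | nil => intro a; rfl
  | @cons b m l l' hb ih =>
    intro a
    have e : List.replicate (m + 1) b ++ l' = b :: (List.replicate m b ++ l') := by
      rw [List.replicate_succ, List.cons_append]
    rw [e, switches, ← e, switches_replicate_append, ih b, switches]

private lemma blowup_switches {α : Type*} [DecidableEq α] {l l' : List α}
    (hb : Blowup l l') : switches l' = switches l := by
  cases hb with
  | nil => rfl
  | @cons a m l l' hb =>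
    rw [switches_replicate_append, blowup_switches_cons hb a]

private lemma blowup_filter {α : Type*} [DecidableEq α] (p : α → Bool) {l l' : List α}
    (hb : Blowup l l') : Blowup (l.filter p) (l'.filter p) := by
  induction hb with
  | nil => exact .nil
  | @cons a m l l' hb ih =>
    rw [List.filter_append, List.filter_replicate, List.filter_cons]
    by_cases hp : p a
    · simp only [hp, if_true]
      exact .cons a m ih
    · simp only [hp, if_false, Bool.false_eq_true, List.nil_append]
      exact ih

private lemma switches_map {α : Type*} {γ : Type*} [DecidableEq α] [DecidableEq γ]
    (f : α → γ) : ∀ (l : List α), (∀ x ∈ l, ∀ y ∈ l, f x = f y → x = y) →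
      switches (l.map f) = switches l
  | [], _ => rfl
  | [_], _ => rfl
  | a :: b :: t, hinj => by
    simp only [List.map_cons, switches]
    have h1 : (if f a = f b then 0 else 1) = (if a = b then 0 else 1) := by
      by_cases hab : a = b
      · simp [hab]
      · have : f a ≠ f b := fun e =>
          hab (hinj a (by simp) b (by simp) e)
        simp [hab, this]
    have h2 := switches_map f (b :: t) (fun x hx y hy =>
      hinj x (List.mem_cons_of_mem a hx) y (List.mem_cons_of_mem a hy))
    simp only [List.map_cons] at h2
    rw [h1, h2]

/-- Subadditivity of complexity under operadic composition of sequences: if the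
block projection of `h` is a blowup of `f` and the `r`-th block subsequence of `h`
is a blowup of `g r`, then pairwise alternations of the composite `h` are bounded
by the internal alternation of `g r` (same block) resp. by `alt_{rs}(f)`
(distinct blocks) — exactly as predicted by the complete graph operad. -/
theorem complexity_subadditive
    {n N : ℕ} (β : Fin N → Fin n)
    (f : List (Fin n)) (g : Fin n → List (Fin N)) (h : List (Fin N))
    (hg : ∀ (r : Fin n), ∀ x ∈ g r, β x = r)
    (hmap : Blowup f (h.map β))
    (hblock : ∀ r : Fin n, Blowup (g r) (h.filter (fun x => β x == r))) :
    ∀ i j : Fin N, i ≠ j →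
      (β i = β j → altOn h i j ≤ altOn (g (β i)) i j) ∧
      (β i ≠ β j → altOn h i j ≤ altOn f (β i) (β j)) := by
  intro i j hij
  constructor
  · -- same block
    intro hbij
    have hfil : h.filter (fun x => x == i || x == j)
        = (h.filter (fun x => β x == β i)).filter (fun x => x == i || x == j) := by
      rw [List.filter_filter]
      apply List.filter_congr
      intro x _
      by_cases hxi : x = i
      · simp [hxi]
      · by_cases hxj : x = j
        · simp [hxj, hbij]
        · simp [hxi, hxj]
    have hb := blowup_filter (fun x => x == i || x == j) (hblock (β i))
    have := blowup_switches hb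
    rw [altOn, hfil, this]
    exact le_rfl
  · -- distinct blocks
    intro hne
    set li := h.filter (fun x => x == i || x == j) with hli
    have hmemij : ∀ x ∈ li, x = i ∨ x = j := by
      intro x hx
      have := List.of_mem_filter hx
      simpa using this
    have hinj : ∀ x ∈ li, ∀ y ∈ li, β x = β y → x = y := by
      intro x hx y hy hxy
      rcases hmemij x hx with rfl | rfl <;> rcases hmemij y hy with rfl | rfl <;>
        first | rfl | (exact absurd hxy hne) | (exact absurd hxy.symm hne)
    have hswmap : switches (li.map β) = switches li := switches_map β li hinj
    have hself : (li.map β).filter (fun y => y == β i || y == β j) = li.map β := by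
      rw [List.filter_eq_self]
      intro y hy
      rcases List.mem_map.1 hy with ⟨x, hx, rfl⟩
      rcases hmemij x hx with rfl | rfl <;> simp
    have hsub : ((li.map β).filter (fun y => y == β i || y == β j)).Sublist
        ((h.map β).filter (fun y => y == β i || y == β j)) :=
      List.Sublist.filter _ (List.Sublist.map β (List.filter_sublist (l := h)))
    have hbf := blowup_filter (fun y => y == β i || y == β j) hmap
    have hbs := blowup_switches hbf
    calc altOn h i j = switches li := rfl
      _ = switches (li.map β) := hswmap.symm
      _ = switches ((li.map β).filter (fun y => y == β i || y == β j)) := by rw [hself]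
      _ ≤ switches ((h.map β).filter (fun y => y == β i || y == β j)) :=
          (switches_sublist hsub).1
      _ = switches (f.filter (fun y => y == β i || y == β j)) := hbs
      _ = altOn f (β i) (β j) := rfl
end

section
/- The n-fold filtration of the complete graph operad is multiplicative: if (μ,σ) ∈ K_p has all labels μ_{ij} ≤ n−1 with appropriate permutation conditions (i.e., lies in the n-th filtration stage K_p^{(n)}), and each (μ_r, σ_r) ∈ K_{i_r}^{(n)}, then the operadic composite Γ((μ,σ); (μ_1,σ_1), …, (μ_p,σ_p)) lies in K^{(n)}_{i_1+⋯+i_p}. -/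
/-!
STATEMENT 18: The `n`-th filtration of the complete graph operad is multiplicative:
if `(μ,σ) ∈ K_p^{(n)}` (all restrictions `φ*_{ij}` land in `K_2^{(n)}`, i.e. all
labels `μ_{ij} ≤ n−1`) and each `(μ_r,σ_r) ∈ K_{i_r}^{(n)}`, then the composite
`Γ((μ,σ); (μ_1,σ_1), …, (μ_p,σ_p))` lies in `K^{(n)}_{i_1+⋯+i_p}`.
-/

open Equiv Finset

/-- An element of the complete graph operad `K p`. -/
def KEl (p : ℕ) : Type := (Fin p → Fin p → ℕ) × Equiv.Perm (Fin p)

/-- The canonical (lexicographic, order-preserving) identification of a disjoint union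
of blocks `Fin (k i)` with `Fin (∑ i, k i)`. -/
noncomputable def finSigma {p : ℕ} (k : Fin p → ℕ) : (Σ i, Fin (k i)) ≃ Fin (∑ i, k i) :=
  (toLex : (Σ i, Fin (k i)) ≃ (Σₗ i, Fin (k i))).trans
    (monoEquivOfFin (Σₗ i : Fin p, Fin (k i))
      (by simp [Fintype.card_sigma])).symm.toEquiv

/-- The block permutation `σ(σ_1, …, σ_p)` of the permutation operad. -/
noncomputable def blockPerm {p : ℕ} (k : Fin p → ℕ) (σ : Equiv.Perm (Fin p))
    (σs : ∀ i, Equiv.Perm (Fin (k i))) : Equiv.Perm (Fin (∑ i, k i)) :=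
  ((finSigma k).symm.trans
    ((Equiv.sigmaCongrRight σs).trans
      ((Equiv.sigmaCongr σ
          (fun i => finCongr (congrArg k (σ.symm_apply_apply i).symm))).trans
        ((finSigma (fun j => k (σ.symm j))).trans
          (finCongr (Equiv.sum_comp σ.symm k))))))

/-- Operadic composition in the complete graph operad: internal labels within a block
come from that block's element, external labels between blocks from the outer one. -/
noncomputable def compK {p : ℕ} {k : Fin p → ℕ} (x : KEl p) (ys : ∀ i, KEl (k i)) :
    KEl (∑ i, k i) :=
  ⟨fun a b =>
    let pa := (finSigma k).symm a
    let pb := (finSigma k).symm b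
    if h : pa.1 = pb.1 then (ys pa.1).1 pa.2 (Fin.cast (congrArg k h.symm) pb.2)
    else x.1 pa.1 pb.1,
   blockPerm k x.2 (fun i => (ys i).2)⟩

/-- The `n`-th filtration stage `K_p^{(n)}`: all restrictions `φ*_{ij}` lie in
`K_2^{(n)}`, i.e. every label satisfies `μ_{ij} ≤ n − 1`. -/
def filtK {p : ℕ} (n : ℕ) (x : KEl p) : Prop :=
  ∀ i j : Fin p, i < j → x.1 i j ≤ n - 1

lemma val_lt_of_rec_lt {p : ℕ} {k : Fin p → ℕ} {i j : Fin p} (h : i = j)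
    {u : Fin (k i)} {v : Fin (k j)} (hlt : h ▸ u < v) : (u : ℕ) < (v : ℕ) := by
  subst h; exact hlt

/-- The filtration of the complete graph operad is multiplicative: composites of
elements of the `n`-th filtration stage lie in the `n`-th filtration stage. -/
theorem filtration_multiplicative (n p : ℕ) (k : Fin p → ℕ)
    (x : KEl p) (ys : ∀ i, KEl (k i))
    (hx : filtK n x) (hys : ∀ r, filtK n (ys r)) :
    filtK n (compK x ys) := by
  intro a b hab
  have key : ∀ c : Fin (∑ i, k i),
      toLex ((finSigma k).symm c) =
        (monoEquivOfFin (Σₗ i : Fin p, Fin (k i))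
          (by simp [Fintype.card_sigma])).symm.toEquiv.symm c := by
    intro c; rfl
  have hlt : toLex ((finSigma k).symm a) < toLex ((finSigma k).symm b) := by
    rw [key a, key b]
    exact (monoEquivOfFin (Σₗ i : Fin p, Fin (k i))
      (by simp [Fintype.card_sigma])).symm.symm.strictMono hab
  rw [Sigma.Lex.lt_def] at hlt
  show (if h : ((finSigma k).symm a).1 = ((finSigma k).symm b).1 then
      (ys _).1 ((finSigma k).symm a).2 (Fin.cast (congrArg k h.symm) ((finSigma k).symm b).2)
    else x.1 ((finSigma k).symm a).1 ((finSigma k).symm b).1) ≤ n - 1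
  rcases hlt with h1 | ⟨heq, h2⟩
  · have h1' : ((finSigma k).symm a).1 < ((finSigma k).symm b).1 := h1
    rw [dif_neg (ne_of_lt h1')]
    exact hx _ _ h1'
  · have heq' : ((finSigma k).symm a).1 = ((finSigma k).symm b).1 := heq
    rw [dif_pos heq']
    apply hys
    rw [Fin.lt_def]
    exact val_lt_of_rec_lt heq h2
end
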